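/- Let T be a logic extending IPC. Every NNIL formula A can be decomposed into T-components: there is a finite set Γ_A of T-components with T ⊢ A ↔ ⋁Γ_A, and moreover all atoms of Γ_A occur in A. -/

import Mathlib

inductive Fm : Type
  | bot : Fm
  | atom : ℕ → Fm
  | and : Fm → Fm → Fm
  | or : Fm → Fm → Fm
  | imp : Fm → Fm → Fm
deriving DecidableEq

namespace Fm

def neg (A : Fm) : Fm := A.imp .bot
def top : Fm := Fm.bot.imp .bot
def iff (A B : Fm) : Fm := (A.imp B).and (B.imp A)

def subst (θ : ℕ → Fm) : Fm → Fm
  | bot => bot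
  | atom n => θ n
  | and A B => (A.subst θ).and (B.subst θ)
  | or A B => (A.subst θ).or (B.subst θ)
  | imp A B => (A.subst θ).imp (B.subst θ)

def atoms : Fm → Finset ℕ
  | bot => ∅
  | atom n => {n}
  | and A B => A.atoms ∪ B.atoms
  | or A B => A.atoms ∪ B.atoms
  | imp A B => A.atoms ∪ B.atoms

/-- maximal nesting of implications in the left/overall: `c→`. -/
def cimp : Fm → ℕ
  | bot => 0
  | atom _ => 0
  | and A B => max A.cimp B.cimp
  | or A B => max A.cimp B.cimp
  | imp A B => 1 + max A.cimp B.cimp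

end Fm

def bigAndL (l : List Fm) : Fm := l.foldr Fm.and Fm.top
def bigOrL (l : List Fm) : Fm := l.foldr Fm.or Fm.bot

/-- nonempty disjunction -/
def bigOrNE : Fm → List Fm → Fm
  | A, [] => A
  | A, B :: l => A.or (bigOrNE B l)

/-- Hilbert-style intuitionistic propositional calculus. -/
inductive IPC : Fm → Prop
  | imp_k (A B : Fm) : IPC (A.imp (B.imp A))
  | imp_s (A B C : Fm) : IPC ((A.imp (B.imp C)).imp ((A.imp B).imp (A.imp C)))
  | and_intro (A B : Fm) : IPC (A.imp (B.imp (A.and B)))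
  | and_left (A B : Fm) : IPC ((A.and B).imp A)
  | and_right (A B : Fm) : IPC ((A.and B).imp B)
  | or_inl (A B : Fm) : IPC (A.imp (A.or B))
  | or_inr (A B : Fm) : IPC (B.imp (A.or B))
  | or_elim (A B C : Fm) : IPC ((A.imp C).imp ((B.imp C).imp ((A.or B).imp C)))
  | exfalso (A : Fm) : IPC (Fm.bot.imp A)
  | mp {A B : Fm} : IPC (A.imp B) → IPC A → IPC B

/-- Γ-preservativity in the logic T : `A ⊳_{T,Γ} B`. -/
def Pres (T : Fm → Prop) (Γ : Set Fm) (A B : Fm) : Prop :=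
  ∀ E ∈ Γ, T (E.imp A) → T (E.imp B)

/-- substitutions are identity on the parameters. -/
def IdOnPar (par : Finset ℕ) (θ : ℕ → Fm) : Prop :=
  ∀ p ∈ par, θ p = Fm.atom p

/-- implication-free formulas. -/
inductive NI : Fm → Prop
  | bot : NI .bot
  | atom (n : ℕ) : NI (.atom n)
  | and {A B : Fm} : NI A → NI B → NI (A.and B)
  | or {A B : Fm} : NI A → NI B → NI (A.or B)

/-- No Nested Implications in the Left. -/
inductive NNIL : Fm → Prop
  | bot : NNIL .bot
  | atom (n : ℕ) : NNIL (.atom n)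
  | and {A B : Fm} : NNIL A → NNIL B → NNIL (A.and B)
  | or {A B : Fm} : NNIL A → NNIL B → NNIL (A.or B)
  | imp {A B : Fm} : NI A → NNIL B → NNIL (A.imp B)

def IPCPrime (A : Fm) : Prop :=
  ∀ B C, IPC (A.imp (B.or C)) → IPC (A.imp B) ∨ IPC (A.imp C)

/-- T-components: `⋀Γ ∧ ⋀Δ`, Γ atoms, Δ implications with atomic
antecedents not T-provable from Γ. -/
def IsComponentOver (T : Fm → Prop) (B : Fm) : Prop :=
  ∃ (as : List ℕ) (imps : List (ℕ × Fm)),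
    B = (bigAndL (as.map Fm.atom)).and
          (bigAndL (imps.map fun p => (Fm.atom p.1).imp p.2)) ∧
    ∀ p ∈ imps, ¬ T ((bigAndL (as.map Fm.atom)).imp (Fm.atom p.1))


section Infra

open Fm

/-! ### IPC combinators -/

lemma ipc_id (A : Fm) : IPC (A.imp A) :=
  IPC.mp (IPC.mp (IPC.imp_s A (A.imp A) A) (IPC.imp_k A (A.imp A))) (IPC.imp_k A A)

lemma ipc_top : IPC Fm.top := ipc_id .bot

lemma ipc_comp {A B C : Fm} (h1 : IPC (A.imp B)) (h2 : IPC (B.imp C)) : IPC (A.imp C) :=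
  IPC.mp (IPC.mp (IPC.imp_s A B C) (IPC.mp (IPC.imp_k (B.imp C) A) h2)) h1

lemma ipc_flip {A B C : Fm} (h : IPC (A.imp (B.imp C))) : IPC (B.imp (A.imp C)) :=
  ipc_comp (IPC.imp_k B A) (IPC.mp (IPC.imp_s A B C) h)

lemma ipc_imp_imp_trans {X Y Z W : Fm} (h : IPC (X.imp (Y.imp Z))) (h2 : IPC (Z.imp W)) :
    IPC (X.imp (Y.imp W)) :=
  ipc_comp h (IPC.mp (IPC.imp_s Y Z W) (IPC.mp (IPC.imp_k (Z.imp W) Y) h2))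

/-! ### Natural deduction layer -/

def Der (Γ : List Fm) (A : Fm) : Prop := IPC ((bigAndL Γ).imp A)

lemma der_of_ipc {Γ : List Fm} {A : Fm} (h : IPC A) : Der Γ A :=
  IPC.mp (IPC.imp_k A (bigAndL Γ)) h

lemma der_mp {Γ : List Fm} {A B : Fm} (h1 : Der Γ (A.imp B)) (h2 : Der Γ A) : Der Γ B :=
  IPC.mp (IPC.mp (IPC.imp_s (bigAndL Γ) A B) h1) h2

lemma bigAndL_cons (A : Fm) (l : List Fm) : bigAndL (A :: l) = A.and (bigAndL l) := rfl

lemma ipc_bigAnd_elim_mem {B : Fm} {l : List Fm} (h : B ∈ l) : IPC ((bigAndL l).imp B) := by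
  induction l with
  | nil => simp at h
  | cons C l ih =>
    rcases List.mem_cons.1 h with rfl | h
    · exact IPC.and_left _ _
    · exact ipc_comp (IPC.and_right C (bigAndL l)) (ih h)

lemma der_ax {Γ : List Fm} {A : Fm} (h : A ∈ Γ) : Der Γ A := ipc_bigAnd_elim_mem h

lemma der_ax0 {Γ : List Fm} {A : Fm} : Der (A :: Γ) A := der_ax List.mem_cons_self

lemma der_weak {Γ : List Fm} {A B : Fm} (h : Der Γ B) : Der (A :: Γ) B :=
  ipc_comp (IPC.and_right A (bigAndL Γ)) h

lemma der_intro {Γ : List Fm} {A B : Fm} (h : Der (A :: Γ) B) : Der Γ (A.imp B) :=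
  ipc_flip (ipc_imp_imp_trans (IPC.and_intro A (bigAndL Γ)) h)

lemma der_elim {Γ : List Fm} {A B : Fm} (h : Der Γ (A.imp B)) : Der (A :: Γ) B :=
  IPC.mp
    (IPC.mp (IPC.imp_s (bigAndL (A :: Γ)) (bigAndL Γ) B)
      (ipc_comp (IPC.and_left A (bigAndL Γ)) (ipc_flip h)))
    (IPC.and_right A (bigAndL Γ))

lemma der_and_intro {Γ : List Fm} {A B : Fm} (h1 : Der Γ A) (h2 : Der Γ B) :
    Der Γ (A.and B) := der_mp (der_mp (der_of_ipc (IPC.and_intro A B)) h1) h2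

lemma der_and_left {Γ : List Fm} {A B : Fm} (h : Der Γ (A.and B)) : Der Γ A :=
  der_mp (der_of_ipc (IPC.and_left A B)) h

lemma der_and_right {Γ : List Fm} {A B : Fm} (h : Der Γ (A.and B)) : Der Γ B :=
  der_mp (der_of_ipc (IPC.and_right A B)) h

lemma der_or_inl {Γ : List Fm} {A B : Fm} (h : Der Γ A) : Der Γ (A.or B) :=
  der_mp (der_of_ipc (IPC.or_inl A B)) h

lemma der_or_inr {Γ : List Fm} {A B : Fm} (h : Der Γ B) : Der Γ (A.or B) :=
  der_mp (der_of_ipc (IPC.or_inr A B)) h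

lemma der_or_elim {Γ : List Fm} {A B C : Fm} (h : Der Γ (A.or B))
    (h1 : Der (A :: Γ) C) (h2 : Der (B :: Γ) C) : Der Γ C :=
  der_mp (der_mp (der_mp (der_of_ipc (IPC.or_elim A B C)) (der_intro h1)) (der_intro h2)) h

lemma der_exfalso {Γ : List Fm} {A : Fm} (h : Der Γ .bot) : Der Γ A :=
  der_mp (der_of_ipc (IPC.exfalso A)) h

lemma der_top {Γ : List Fm} : Der Γ Fm.top := der_of_ipc ipc_top

lemma ipc_of_der_nil {A : Fm} (h : Der [] A) : IPC A := IPC.mp h ipc_top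

lemma der_singleton_of_ipc {A B : Fm} (h : IPC (A.imp B)) : Der [A] B :=
  ipc_comp (IPC.and_left A Fm.top) h

lemma ipc_imp_of_der {A B : Fm} (h : Der [A] B) : IPC (A.imp B) :=
  ipc_of_der_nil (der_intro h)

lemma der_bigAnd_intro {Γ : List Fm} {l : List Fm} (h : ∀ B ∈ l, Der Γ B) :
    Der Γ (bigAndL l) := by
  induction l with
  | nil => exact der_top
  | cons C l ih =>
    exact der_and_intro (h C (by simp)) (ih fun B hB => h B (by simp [hB]))

lemma der_bigAnd_mem {Γ : List Fm} {l : List Fm} {B : Fm} (hB : B ∈ l)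
    (h : Der Γ (bigAndL l)) : Der Γ B :=
  der_mp (der_of_ipc (ipc_bigAnd_elim_mem hB)) h

lemma der_subset {Γ Γ' : List Fm} {A : Fm} (h : Der Γ A) (hs : ∀ B ∈ Γ, B ∈ Γ') :
    Der Γ' A :=
  IPC.mp (IPC.mp (IPC.imp_s (bigAndL Γ') (bigAndL Γ) A) (der_of_ipc h))
    (der_bigAnd_intro fun B hB => der_ax (hs B hB))

/-! ### bigOr lemmas -/

lemma bigOrL_cons (A : Fm) (l : List Fm) : bigOrL (A :: l) = A.or (bigOrL l) := rfl

lemma ipc_bigOr_elim {l : List Fm} {X : Fm} (h : ∀ B ∈ l, IPC (B.imp X)) :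
    IPC ((bigOrL l).imp X) := by
  induction l with
  | nil => exact IPC.exfalso X
  | cons C l ih =>
    exact IPC.mp (IPC.mp (IPC.or_elim C (bigOrL l) X) (h C (by simp)))
      (ih fun B hB => h B (by simp [hB]))

lemma ipc_bigOr_mem {l : List Fm} {B : Fm} (h : B ∈ l) : IPC (B.imp (bigOrL l)) := by
  induction l with
  | nil => simp at h
  | cons C l ih =>
    rcases List.mem_cons.1 h with rfl | h
    · exact IPC.or_inl _ _
    · exact ipc_comp (ih h) (IPC.or_inr C (bigOrL l))

lemma ipc_bigOr_mono {l l' : List Fm} (h : ∀ B ∈ l, B ∈ l') :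
    IPC ((bigOrL l).imp (bigOrL l')) :=
  ipc_bigOr_elim fun B hB => ipc_bigOr_mem (h B hB)

lemma der_bigOr_imp {Γ : List Fm} {l : List Fm} {X : Fm}
    (hb : ∀ B ∈ l, Der Γ (B.imp X)) : Der Γ ((bigOrL l).imp X) := by
  induction l with
  | nil => exact der_of_ipc (IPC.exfalso X)
  | cons C l ih =>
    exact der_mp (der_mp (der_of_ipc (IPC.or_elim C (bigOrL l) X)) (hb C (by simp)))
      (ih fun B hB => hb B (by simp [hB]))

lemma der_bigOr_elim {Γ : List Fm} {l : List Fm} {X : Fm} (h : Der Γ (bigOrL l))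
    (hb : ∀ B ∈ l, Der (B :: Γ) X) : Der Γ X :=
  der_mp (der_bigOr_imp fun B hB => der_intro (hb B hB)) h

/-! ### fixed-shape IPC lemmas -/

lemma ipc_iff_intro {A B : Fm} (h1 : IPC (A.imp B)) (h2 : IPC (B.imp A)) : IPC (A.iff B) :=
  IPC.mp (IPC.mp (IPC.and_intro _ _) h1) h2

lemma ipc_iff_mp {A B : Fm} (h : IPC (A.iff B)) : IPC (A.imp B) :=
  IPC.mp (IPC.and_left _ _) h

lemma ipc_iff_mpr {A B : Fm} (h : IPC (A.iff B)) : IPC (B.imp A) :=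
  IPC.mp (IPC.and_right _ _) h

lemma ipc_iff_refl (A : Fm) : IPC (A.iff A) := ipc_iff_intro (ipc_id A) (ipc_id A)

lemma ipc_comp_fm (A B C : Fm) : IPC ((A.imp B).imp ((B.imp C).imp (A.imp C))) := by
  apply ipc_of_der_nil; apply der_intro; apply der_intro; apply der_intro
  have h1 : Der [A, B.imp C, A.imp B] (A.imp B) := der_ax (by simp)
  have h2 : Der [A, B.imp C, A.imp B] (B.imp C) := der_ax (by simp)
  have h3 : Der [A, B.imp C, A.imp B] A := der_ax (by simp)
  exact der_mp h2 (der_mp h1 h3)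

lemma ipc_congr_and_fm (A B C D : Fm) :
    IPC ((A.iff B).imp ((C.iff D).imp ((A.and C).iff (B.and D)))) := by
  apply ipc_of_der_nil; apply der_intro; apply der_intro
  have hab : Der [C.iff D, A.iff B] (A.iff B) := der_ax (by simp)
  have hcd : Der [C.iff D, A.iff B] (C.iff D) := der_ax (by simp)
  apply der_and_intro <;> apply der_intro
  · exact der_and_intro
      (der_mp (der_and_left (der_weak hab)) (der_and_left der_ax0))
      (der_mp (der_and_left (der_weak hcd)) (der_and_right der_ax0))
  · exact der_and_intro
      (der_mp (der_and_right (der_weak hab)) (der_and_left der_ax0))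
      (der_mp (der_and_right (der_weak hcd)) (der_and_right der_ax0))

lemma ipc_congr_or_fm (A B C D : Fm) :
    IPC ((A.iff B).imp ((C.iff D).imp ((A.or C).iff (B.or D)))) := by
  apply ipc_of_der_nil; apply der_intro; apply der_intro
  have hab : Der [C.iff D, A.iff B] (A.iff B) := der_ax (by simp)
  have hcd : Der [C.iff D, A.iff B] (C.iff D) := der_ax (by simp)
  apply der_and_intro <;> apply der_intro
  · refine der_or_elim der_ax0 ?_ ?_
    · exact der_or_inl (der_mp (der_and_left (der_weak (der_weak hab))) der_ax0)
    · exact der_or_inr (der_mp (der_and_left (der_weak (der_weak hcd))) der_ax0)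
  · refine der_or_elim der_ax0 ?_ ?_
    · exact der_or_inl (der_mp (der_and_right (der_weak (der_weak hab))) der_ax0)
    · exact der_or_inr (der_mp (der_and_right (der_weak (der_weak hcd))) der_ax0)

lemma ipc_or_bot (X : Fm) : IPC (X.iff (X.or .bot)) :=
  ipc_iff_intro (IPC.or_inl X .bot)
    (IPC.mp (IPC.mp (IPC.or_elim X .bot X) (ipc_id X)) (IPC.exfalso X))

lemma ipc_bigOr_append (x y : List Fm) :
    IPC (((bigOrL x).or (bigOrL y)).iff (bigOrL (x ++ y))) := by
  apply ipc_iff_intro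
  · exact IPC.mp (IPC.mp (IPC.or_elim _ _ _)
      (ipc_bigOr_mono (fun B hB => List.mem_append_left _ hB)))
      (ipc_bigOr_mono (fun B hB => List.mem_append_right _ hB))
  · apply ipc_bigOr_elim
    intro B hB
    rcases List.mem_append.1 hB with h | h
    · exact ipc_comp (ipc_bigOr_mem h) (IPC.or_inl _ _)
    · exact ipc_comp (ipc_bigOr_mem h) (IPC.or_inr _ _)

lemma ipc_and_bigOr (X : Fm) (l : List Fm) :
    IPC ((X.and (bigOrL l)).iff (bigOrL (l.map fun B => X.and B))) := by
  apply ipc_iff_intro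
  · apply ipc_imp_of_der
    refine der_bigOr_elim (der_and_right der_ax0) ?_
    intro B hB
    refine der_mp (der_of_ipc (ipc_bigOr_mem (List.mem_map_of_mem hB))) ?_
    exact der_and_intro (der_and_left (der_weak der_ax0)) der_ax0
  · apply ipc_bigOr_elim
    intro B hB
    rcases List.mem_map.1 hB with ⟨C, hC, rfl⟩
    apply ipc_imp_of_der
    exact der_and_intro (der_and_left der_ax0)
      (der_mp (der_of_ipc (ipc_bigOr_mem hC)) (der_and_right der_ax0))

/-! ### T-level lemmas -/

section Tlevel

variable {T : Fm → Prop} (hext : ∀ A, IPC A → T A)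
  (hmp : ∀ A B, T (A.imp B) → T A → T B)

include hext hmp

lemma t_iff_intro {A B : Fm} (h1 : T (A.imp B)) (h2 : T (B.imp A)) : T (A.iff B) :=
  hmp _ _ (hmp _ _ (hext _ (IPC.and_intro _ _)) h1) h2

lemma t_iff_mp {A B : Fm} (h : T (A.iff B)) : T (A.imp B) :=
  hmp _ _ (hext _ (IPC.and_left _ _)) h

lemma t_iff_mpr {A B : Fm} (h : T (A.iff B)) : T (B.imp A) :=
  hmp _ _ (hext _ (IPC.and_right _ _)) h

lemma t_imp_trans {A B C : Fm} (h1 : T (A.imp B)) (h2 : T (B.imp C)) : T (A.imp C) :=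
  hmp _ _ (hmp _ _ (hext _ (ipc_comp_fm A B C)) h1) h2

lemma t_iff_trans {A B C : Fm} (h1 : T (A.iff B)) (h2 : T (B.iff C)) : T (A.iff C) :=
  t_iff_intro hext hmp
    (t_imp_trans hext hmp (t_iff_mp hext hmp h1) (t_iff_mp hext hmp h2))
    (t_imp_trans hext hmp (t_iff_mpr hext hmp h2) (t_iff_mpr hext hmp h1))

lemma t_iff_symm {A B : Fm} (h : T (A.iff B)) : T (B.iff A) :=
  t_iff_intro hext hmp (t_iff_mpr hext hmp h) (t_iff_mp hext hmp h)

lemma t_congr_and {A B C D : Fm} (h1 : T (A.iff B)) (h2 : T (C.iff D)) :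
    T ((A.and C).iff (B.and D)) :=
  hmp _ _ (hmp _ _ (hext _ (ipc_congr_and_fm A B C D)) h1) h2

lemma t_congr_or {A B C D : Fm} (h1 : T (A.iff B)) (h2 : T (C.iff D)) :
    T ((A.or C).iff (B.or D)) :=
  hmp _ _ (hmp _ _ (hext _ (ipc_congr_or_fm A B C D)) h1) h2

lemma t_or_bot {A X : Fm} (h : T (A.iff X)) : T (A.iff (X.or .bot)) :=
  t_iff_trans hext hmp h (hext _ (ipc_or_bot X))

end Tlevel

/-! ### atoms lemmas -/

lemma atoms_top : Fm.top.atoms = ∅ := rfl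

lemma mem_atoms_bigAndL {a : ℕ} {l : List Fm} :
    a ∈ (bigAndL l).atoms ↔ ∃ x ∈ l, a ∈ x.atoms := by
  induction l with
  | nil => simp [bigAndL, Fm.top, Fm.atoms]
  | cons C l ih =>
    rw [bigAndL_cons]
    show a ∈ C.atoms ∪ (bigAndL l).atoms ↔ _
    simp only [Finset.mem_union, ih, List.mem_cons]
    constructor
    · rintro (h | ⟨x, hx, h⟩)
      · exact ⟨C, Or.inl rfl, h⟩
      · exact ⟨x, Or.inr hx, h⟩
    · rintro ⟨x, (rfl | hx), h⟩
      · exact Or.inl h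
      · exact Or.inr ⟨x, hx, h⟩

/-! ### weights -/

def kk : Fm → ℕ
  | .bot => 1
  | .atom _ => 1
  | .and a b => kk a * kk b + kk a
  | .or a b => kk a + kk b
  | .imp _ _ => 1

def ww : Fm → ℕ
  | .bot => 1
  | .atom _ => 1
  | .and a b => ww a + ww b + 1
  | .or a b => ww a + ww b + 1
  | .imp c b => kk c * (ww b + 1)

lemma kk_pos (A : Fm) : 1 ≤ kk A := by
  induction A with
  | bot => simp [kk]
  | atom n => simp [kk]
  | and a b iha ihb => simp [kk]; nlinarith
  | or a b iha ihb => simp [kk]; omega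
  | imp a b iha ihb => simp [kk]

lemma ww_pos (A : Fm) : 1 ≤ ww A := by
  induction A with
  | bot => simp [ww]
  | atom n => simp [ww]
  | and a b iha ihb => simp [ww]
  | or a b iha ihb => simp [ww]
  | imp a b iha ihb => simp [ww]; nlinarith [kk_pos a]

/-! ### components -/

def form (c : List ℕ × List (ℕ × Fm)) : Fm :=
  (bigAndL (c.1.map Fm.atom)).and
    (bigAndL (c.2.map fun p => (Fm.atom p.1).imp p.2))

def wsum (Δ : List (ℕ × Fm)) : ℕ := (Δ.map fun p => ww p.2).sum

def Good (T : Fm → Prop) (c : List ℕ × List (ℕ × Fm)) : Prop :=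
  ∀ p ∈ c.2, ¬ T ((bigAndL (c.1.map Fm.atom)).imp (Fm.atom p.1))

def Out (T : Fm → Prop) (A : Fm) (m : ℕ) (L : List (List ℕ × List (ℕ × Fm))) : Prop :=
  (∀ c ∈ L, Good T c ∧ (∀ p ∈ c.2, NNIL p.2) ∧ (form c).atoms ⊆ A.atoms ∧ wsum c.2 < m)
    ∧ T (A.iff (bigOrL (L.map form)))

lemma wsum_append (d1 d2 : List (ℕ × Fm)) : wsum (d1 ++ d2) = wsum d1 + wsum d2 := by
  simp [wsum]

lemma mem_atoms_form {a : ℕ} {c : List ℕ × List (ℕ × Fm)} :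
    a ∈ (form c).atoms ↔
      (a ∈ c.1 ∨ ∃ p ∈ c.2, a = p.1 ∨ a ∈ p.2.atoms) := by
  simp only [form, Fm.atoms, Finset.mem_union, mem_atoms_bigAndL]
  constructor
  · rintro (⟨x, hx, hax⟩ | ⟨x, hx, hax⟩)
    · rcases List.mem_map.1 hx with ⟨n, hn, rfl⟩
      simp [Fm.atoms] at hax; subst hax; exact Or.inl hn
    · rcases List.mem_map.1 hx with ⟨p, hp, rfl⟩
      simp [Fm.atoms] at hax
      exact Or.inr ⟨p, hp, by simpa using hax⟩
  · rintro (h | ⟨p, hp, h⟩)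
    · exact Or.inl ⟨Fm.atom a, List.mem_map_of_mem h, by simp [Fm.atoms]⟩
    · refine Or.inr ⟨(Fm.atom p.1).imp p.2, List.mem_map_of_mem hp, ?_⟩
      simp [Fm.atoms]; tauto

lemma atoms_form_merge {c1 c2 : List ℕ × List (ℕ × Fm)} :
    (form (c1.1 ++ c2.1, c1.2 ++ c2.2)).atoms ⊆ (form c1).atoms ∪ (form c2).atoms := by
  intro a ha
  rw [mem_atoms_form] at ha
  simp only [Finset.mem_union, mem_atoms_form]
  simp only [List.mem_append] at ha
  rcases ha with (h | h) | ⟨p, (hp | hp), h⟩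
  · exact Or.inl (Or.inl h)
  · exact Or.inr (Or.inl h)
  · exact Or.inl (Or.inr ⟨p, hp, h⟩)
  · exact Or.inr (Or.inr ⟨p, hp, h⟩)

lemma ipc_form_merge (c1 c2 : List ℕ × List (ℕ × Fm)) :
    IPC (((form c1).and (form c2)).iff (form (c1.1 ++ c2.1, c1.2 ++ c2.2))) := by
  obtain ⟨a1, d1⟩ := c1
  obtain ⟨a2, d2⟩ := c2
  dsimp only
  apply ipc_iff_intro <;> apply ipc_imp_of_der
  · apply der_and_intro <;> apply der_bigAnd_intro <;> intro B hB <;>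
      simp only [List.map_append, List.mem_append] at hB
    · rcases hB with h | h
      · exact der_bigAnd_mem h (der_and_left (der_and_left der_ax0))
      · exact der_bigAnd_mem h (der_and_left (der_and_right der_ax0))
    · rcases hB with h | h
      · exact der_bigAnd_mem h (der_and_right (der_and_left der_ax0))
      · exact der_bigAnd_mem h (der_and_right (der_and_right der_ax0))
  · have h0 : Der [form (a1 ++ a2, d1 ++ d2)]
        ((bigAndL ((a1 ++ a2).map Fm.atom)).and
          (bigAndL ((d1 ++ d2).map fun p => (Fm.atom p.1).imp p.2))) := der_ax0
    apply der_and_intro <;> apply der_and_intro <;> apply der_bigAnd_intro <;> intro B hB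
    · refine der_bigAnd_mem ?_ (der_and_left h0)
      simp only [List.map_append, List.mem_append]; exact Or.inl hB
    · refine der_bigAnd_mem ?_ (der_and_right h0)
      simp only [List.map_append, List.mem_append]; exact Or.inl hB
    · refine der_bigAnd_mem ?_ (der_and_left h0)
      simp only [List.map_append, List.mem_append]; exact Or.inr hB
    · refine der_bigAnd_mem ?_ (der_and_right h0)
      simp only [List.map_append, List.mem_append]; exact Or.inr hB

/-! ### specific IPC equivalences -/

lemma ipc_bigOr_and (l : List Fm) (Y : Fm) :
    IPC (((bigOrL l).and Y).iff (bigOrL (l.map fun B => B.and Y))) := by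
  apply ipc_iff_intro
  · apply ipc_imp_of_der
    refine der_bigOr_elim (der_and_left der_ax0) ?_
    intro B hB
    refine der_mp (der_of_ipc (ipc_bigOr_mem (List.mem_map_of_mem hB))) ?_
    exact der_and_intro der_ax0 (der_and_right (der_weak der_ax0))
  · apply ipc_bigOr_elim
    intro B hB
    rcases List.mem_map.1 hB with ⟨C, hC, rfl⟩
    apply ipc_imp_of_der
    exact der_and_intro
      (der_mp (der_of_ipc (ipc_bigOr_mem hC)) (der_and_left der_ax0))
      (der_and_right der_ax0)

lemma ipc_atom_comp (q : ℕ) : IPC ((Fm.atom q).iff (form ([q], []))) := by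
  apply ipc_iff_intro <;> apply ipc_imp_of_der
  · show Der _ (((Fm.atom q).and .top).and .top)
    exact der_and_intro (der_and_intro der_ax0 der_top) der_top
  · have h : Der [form ([q], [])] (((Fm.atom q).and .top).and .top) := der_ax0
    exact der_and_left (der_and_left h)

lemma ipc_bot_imp (B : Fm) : IPC ((Fm.bot.imp B).iff (form ([], []))) := by
  apply ipc_iff_intro <;> apply ipc_imp_of_der
  · show Der _ ((Fm.top).and .top)
    exact der_and_intro der_top der_top
  · exact der_intro (der_exfalso der_ax0)

lemma ipc_imp_comp (q : ℕ) (B : Fm) :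
    IPC (((Fm.atom q).imp B).iff (form ([], [(q, B)]))) := by
  apply ipc_iff_intro <;> apply ipc_imp_of_der
  · show Der _ ((Fm.top).and (((Fm.atom q).imp B).and .top))
    exact der_and_intro der_top (der_and_intro der_ax0 der_top)
  · have h : Der [form ([], [(q, B)])] ((Fm.top).and (((Fm.atom q).imp B).and .top)) :=
      der_ax0
    exact der_and_left (der_and_right h)

lemma ipc_q_iff (q : ℕ) (B : Fm) :
    IPC ((Fm.atom q).imp ((((Fm.atom q).imp B)).iff B)) := by
  apply ipc_of_der_nil; apply der_intro
  apply der_and_intro <;> apply der_intro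
  · exact der_mp der_ax0 (der_weak der_ax0)
  · exact der_mp (der_of_ipc (IPC.imp_k B (Fm.atom q))) der_ax0

lemma ipc_curry (C1 C2 B : Fm) :
    IPC (((C1.and C2).imp B).iff (C1.imp (C2.imp B))) := by
  apply ipc_iff_intro <;> apply ipc_imp_of_der
  · apply der_intro; apply der_intro
    have h : Der [C2, C1, (C1.and C2).imp B] ((C1.and C2).imp B) := der_ax (by simp)
    exact der_mp h (der_and_intro (der_ax (by simp)) der_ax0)
  · apply der_intro
    have h : Der [C1.and C2, C1.imp (C2.imp B)] (C1.imp (C2.imp B)) := der_ax (by simp)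
    exact der_mp (der_mp h (der_and_left der_ax0)) (der_and_right der_ax0)

lemma ipc_uncurry_or (C1 C2 B : Fm) :
    IPC (((C1.or C2).imp B).iff ((C1.imp B).and (C2.imp B))) := by
  apply ipc_iff_intro <;> apply ipc_imp_of_der
  · apply der_and_intro <;> apply der_intro
    · exact der_mp (der_weak der_ax0) (der_or_inl der_ax0)
    · exact der_mp (der_weak der_ax0) (der_or_inr der_ax0)
  · apply der_intro
    refine der_or_elim der_ax0 ?_ ?_
    · exact der_mp (der_and_left (der_weak (der_weak der_ax0))) der_ax0
    · exact der_mp (der_and_right (der_weak (der_weak der_ax0))) der_ax0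

lemma ipc_remove (Γ : List ℕ) (Δ1 Δ2 : List (ℕ × Fm)) (p : ℕ) (D : Fm) :
    IPC (((bigAndL (Γ.map Fm.atom)).imp (Fm.atom p)).imp
      ((form (Γ, Δ1 ++ (p, D) :: Δ2)).iff ((form (Γ, Δ1 ++ Δ2)).and D))) := by
  apply ipc_of_der_nil; apply der_intro
  apply der_and_intro <;> apply der_intro
  · -- [form (Γ, Δ), GA → p] ⊢ (form (Γ, Δ')).and D
    have hF : Der [form (Γ, Δ1 ++ (p, D) :: Δ2),
        (bigAndL (Γ.map Fm.atom)).imp (Fm.atom p)]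
        ((bigAndL (Γ.map Fm.atom)).and
          (bigAndL ((Δ1 ++ (p, D) :: Δ2).map fun r => (Fm.atom r.1).imp r.2))) := der_ax0
    have hGA := der_and_left hF
    have hM := der_and_right hF
    have himp : Der [form (Γ, Δ1 ++ (p, D) :: Δ2),
        (bigAndL (Γ.map Fm.atom)).imp (Fm.atom p)]
        ((bigAndL (Γ.map Fm.atom)).imp (Fm.atom p)) := der_ax (by simp)
    have hpD : Der [form (Γ, Δ1 ++ (p, D) :: Δ2),
        (bigAndL (Γ.map Fm.atom)).imp (Fm.atom p)] ((Fm.atom p).imp D) := by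
      refine der_bigAnd_mem ?_ hM
      exact List.mem_map.2 ⟨(p, D), by simp, rfl⟩
    refine der_and_intro (der_and_intro hGA (der_bigAnd_intro ?_))
      (der_mp hpD (der_mp himp hGA))
    intro B hB
    refine der_bigAnd_mem ?_ hM
    rcases List.mem_map.1 hB with ⟨q, hq, rfl⟩
    refine List.mem_map.2 ⟨q, ?_, rfl⟩
    rcases List.mem_append.1 hq with h | h
    · exact List.mem_append.2 (Or.inl h)
    · exact List.mem_append.2 (Or.inr (List.mem_cons_of_mem _ h))
  · -- [(form (Γ, Δ')).and D, GA → p] ⊢ form (Γ, Δ)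
    have hF : Der [(form (Γ, Δ1 ++ Δ2)).and D,
        (bigAndL (Γ.map Fm.atom)).imp (Fm.atom p)]
        (((bigAndL (Γ.map Fm.atom)).and
          (bigAndL ((Δ1 ++ Δ2).map fun r => (Fm.atom r.1).imp r.2))).and D) := der_ax0
    refine der_and_intro (der_and_left (der_and_left hF)) (der_bigAnd_intro ?_)
    intro B hB
    rcases List.mem_map.1 hB with ⟨q, hq, rfl⟩
    rcases List.mem_append.1 hq with h | h
    · exact der_bigAnd_mem (List.mem_map.2 ⟨q, List.mem_append.2 (Or.inl h), rfl⟩)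
        (der_and_right (der_and_left hF))
    · rcases List.mem_cons.1 h with rfl | h
      · exact der_mp (der_of_ipc (IPC.imp_k D (Fm.atom p))) (der_and_right hF)
      · exact der_bigAnd_mem (List.mem_map.2 ⟨q, List.mem_append.2 (Or.inr h), rfl⟩)
          (der_and_right (der_and_left hF))

/-! ### gluing -/

section Glue

variable {T : Fm → Prop} (hext : ∀ A, IPC A → T A)
  (hmp : ∀ A B, T (A.imp B) → T A → T B)

include hext hmp

lemma t_glue {R : List ℕ × List (ℕ × Fm) → Prop} :
    ∀ l : List Fm,
      (∀ B ∈ l, ∃ L : List (List ℕ × List (ℕ × Fm)),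
        (∀ c ∈ L, R c) ∧ T (B.iff (bigOrL (L.map form)))) →
      ∃ L : List (List ℕ × List (ℕ × Fm)),
        (∀ c ∈ L, R c) ∧ T ((bigOrL l).iff (bigOrL (L.map form))) := by
  intro l
  induction l with
  | nil => exact fun _ => ⟨[], by simp, hext _ (ipc_iff_refl _)⟩
  | cons B l ih =>
    intro h
    obtain ⟨LB, hLB, heB⟩ := h B (by simp)
    obtain ⟨L', hL', he'⟩ := ih fun C hC => h C (by simp [hC])
    refine ⟨LB ++ L', ?_, ?_⟩
    · intro c hc
      rcases List.mem_append.1 hc with h | h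
      · exact hLB c h
      · exact hL' c h
    · rw [List.map_append]
      exact t_iff_trans hext hmp (t_congr_or hext hmp heB he')
        (hext _ (ipc_bigOr_append _ _))

end Glue

def ConjP (T : Fm → Prop) (Γ : List ℕ) (Δ : List (ℕ × Fm)) : Prop :=
  ∃ L : List (List ℕ × List (ℕ × Fm)), (∀ c ∈ L, Good T c ∧ (∀ p ∈ c.2, NNIL p.2) ∧
      (form c).atoms ⊆ (form (Γ, Δ)).atoms ∧ wsum c.2 ≤ wsum Δ)
    ∧ T ((form (Γ, Δ)).iff (bigOrL (L.map form)))

section Glue2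

variable {T : Fm → Prop} (hext : ∀ A, IPC A → T A)
  (hmp : ∀ A B, T (A.imp B) → T A → T B)

include hext hmp

lemma conjoin {A1 A2 : Fm} {m1 m2 : ℕ}
    {L1 L2 : List (List ℕ × List (ℕ × Fm))}
    (hC : ∀ Γ Δ, (∀ p ∈ Δ, NNIL p.2) → wsum Δ + 2 ≤ m1 + m2 → ConjP T Γ Δ)
    (h1 : Out T A1 m1 L1) (h2 : Out T A2 m2 L2) :
    ∃ L, Out T (A1.and A2) (m1 + m2) L := by
  obtain ⟨hc1, he1⟩ := h1
  obtain ⟨hc2, he2⟩ := h2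
  have heq2 : T ((A1.and A2).iff
      (bigOrL ((L1.map form).map fun X => X.and (bigOrL (L2.map form))))) :=
    t_iff_trans hext hmp (t_congr_and hext hmp he1 he2)
      (hext _ (ipc_bigOr_and _ _))
  have hinner : ∀ B ∈ (L1.map form).map fun X => X.and (bigOrL (L2.map form)),
      ∃ L : List (List ℕ × List (ℕ × Fm)), (∀ c ∈ L, Good T c ∧ (∀ p ∈ c.2, NNIL p.2) ∧
        (form c).atoms ⊆ (A1.and A2).atoms ∧ wsum c.2 < m1 + m2) ∧
      T (B.iff (bigOrL (L.map form))) := by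
    intro B hB
    rcases List.mem_map.1 hB with ⟨X, hX, rfl⟩
    rcases List.mem_map.1 hX with ⟨c1, hc1m, rfl⟩
    have hinner2 : ∀ B2 ∈ (L2.map form).map fun Y => (form c1).and Y,
        ∃ L : List (List ℕ × List (ℕ × Fm)), (∀ c ∈ L, Good T c ∧ (∀ p ∈ c.2, NNIL p.2) ∧
          (form c).atoms ⊆ (A1.and A2).atoms ∧ wsum c.2 < m1 + m2) ∧
        T (B2.iff (bigOrL (L.map form))) := by
      intro B2 hB2
      rcases List.mem_map.1 hB2 with ⟨Y, hY, rfl⟩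
      rcases List.mem_map.1 hY with ⟨c2, hc2m, rfl⟩
      obtain ⟨hg1, hn1, ha1, hw1⟩ := hc1 c1 hc1m
      obtain ⟨hg2, hn2, ha2, hw2⟩ := hc2 c2 hc2m
      have hNN : ∀ p ∈ c1.2 ++ c2.2, NNIL p.2 := by
        intro p hp
        rcases List.mem_append.1 hp with h | h
        · exact hn1 p h
        · exact hn2 p h
      obtain ⟨Lc, hLc, heLc⟩ := hC (c1.1 ++ c2.1) (c1.2 ++ c2.2) hNN
        (by rw [wsum_append]; omega)
      refine ⟨Lc, ?_, ?_⟩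
      · intro c hc
        obtain ⟨hg, hn, ha, hw⟩ := hLc c hc
        refine ⟨hg, hn, ?_, ?_⟩
        · refine ha.trans ((atoms_form_merge (c1 := c1) (c2 := c2)).trans ?_)
          show _ ⊆ (A1.atoms ∪ A2.atoms)
          exact Finset.union_subset_union ha1 ha2
        · rw [wsum_append] at hw; omega
      · exact t_iff_trans hext hmp (hext _ (ipc_form_merge c1 c2)) heLc
    obtain ⟨L', hL', he'⟩ := t_glue hext hmp _ hinner2
    exact ⟨L', hL', t_iff_trans hext hmp (hext _ (ipc_and_bigOr _ _)) he'⟩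
  obtain ⟨L, hL, he⟩ := t_glue hext hmp _ hinner
  exact ⟨L, hL, t_iff_trans hext hmp heq2 he⟩

end Glue2

section Key

variable {T : Fm → Prop} (hext : ∀ A, IPC A → T A)
  (hmp : ∀ A B, T (A.imp B) → T A → T B)

include hext hmp

theorem key : ∀ n : ℕ,
    (∀ Γ Δ, (∀ p ∈ Δ, NNIL p.2) → wsum Δ + 1 ≤ n → ConjP T Γ Δ) ∧
    (∀ A, NNIL A → ww A ≤ n → ∃ L, Out T A (ww A) L) := by
  intro n
  induction n using Nat.strong_induction_on with
  | _ n IH =>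
  constructor
  · -- Conjunction part
    intro Γ Δ hN hm
    by_cases hex : ∃ p ∈ Δ, T ((bigAndL (Γ.map Fm.atom)).imp (Fm.atom p.1))
    · obtain ⟨pD, hmem, hTp⟩ := hex
      obtain ⟨p, D⟩ := pD
      obtain ⟨Δ1, Δ2, rfl⟩ := List.append_of_mem hmem
      have hws : wsum (Δ1 ++ (p, D) :: Δ2) = wsum (Δ1 ++ Δ2) + ww D := by
        simp [wsum]; ring
      have hND : NNIL D := hN (p, D) hmem
      have hwD1 : 1 ≤ ww D := ww_pos D
      have hlt : ww D < n := by omega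
      obtain ⟨LD, hLD, heD⟩ := (IH (ww D) hlt).2 D hND le_rfl
      have hrem : T ((form (Γ, Δ1 ++ (p, D) :: Δ2)).iff
          ((form (Γ, Δ1 ++ Δ2)).and D)) :=
        hmp _ _ (hext _ (ipc_remove Γ Δ1 Δ2 p D)) hTp
      have hdist : T ((form (Γ, Δ1 ++ (p, D) :: Δ2)).iff
          (bigOrL ((LD.map form).map fun B => (form (Γ, Δ1 ++ Δ2)).and B))) :=
        t_iff_trans hext hmp (t_iff_trans hext hmp hrem
          (t_congr_and hext hmp (hext _ (ipc_iff_refl _)) heD))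
          (hext _ (ipc_and_bigOr _ _))
      have hsub1 : (form (Γ, Δ1 ++ Δ2)).atoms ⊆
          (form (Γ, Δ1 ++ (p, D) :: Δ2)).atoms := by
        intro a ha
        rw [mem_atoms_form] at ha ⊢
        rcases ha with h | ⟨q, hq, h⟩
        · exact Or.inl h
        · refine Or.inr ⟨q, ?_, h⟩
          simp only [List.mem_append, List.mem_cons] at hq ⊢
          tauto
      have hsubD : D.atoms ⊆ (form (Γ, Δ1 ++ (p, D) :: Δ2)).atoms := by
        intro a ha
        rw [mem_atoms_form]
        exact Or.inr ⟨(p, D), by simp, Or.inr ha⟩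
      have hper : ∀ B ∈ (LD.map form).map fun B => (form (Γ, Δ1 ++ Δ2)).and B,
          ∃ L : List (List ℕ × List (ℕ × Fm)),
            (∀ c ∈ L, Good T c ∧ (∀ q ∈ c.2, NNIL q.2) ∧
              (form c).atoms ⊆ (form (Γ, Δ1 ++ (p, D) :: Δ2)).atoms ∧
              wsum c.2 ≤ wsum (Δ1 ++ (p, D) :: Δ2)) ∧
            T (B.iff (bigOrL (L.map form))) := by
        intro B hB
        rcases List.mem_map.1 hB with ⟨X, hX, rfl⟩
        rcases List.mem_map.1 hX with ⟨c, hc, rfl⟩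
        obtain ⟨hgc, hnc, hac, hwc⟩ := hLD c hc
        have hNN : ∀ q ∈ (Δ1 ++ Δ2) ++ c.2, NNIL q.2 := by
          intro q hq
          rcases List.mem_append.1 hq with h | h
          · refine hN q ?_
            simp only [List.mem_append, List.mem_cons] at h ⊢; tauto
          · exact hnc q h
        obtain ⟨Lc, hLc, heLc⟩ := (IH (wsum (Δ1 ++ (p, D) :: Δ2)) (by omega)).1
          (Γ ++ c.1) ((Δ1 ++ Δ2) ++ c.2) hNN (by rw [wsum_append]; omega)
        refine ⟨Lc, ?_, ?_⟩
        · intro c' hc'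
          obtain ⟨hg', hn', ha', hw'⟩ := hLc c' hc'
          refine ⟨hg', hn', ?_, ?_⟩
          · refine ha'.trans ?_
            refine (atoms_form_merge (c1 := (Γ, Δ1 ++ Δ2)) (c2 := c)).trans ?_
            exact Finset.union_subset hsub1 (hac.trans hsubD)
          · rw [wsum_append] at hw'; omega
        · exact t_iff_trans hext hmp (hext _ (ipc_form_merge (Γ, Δ1 ++ Δ2) c)) heLc
      obtain ⟨L, hL, he⟩ := t_glue hext hmp _ hper
      exact ⟨L, hL, t_iff_trans hext hmp hdist he⟩
    · push_neg at hex
      refine ⟨[(Γ, Δ)], ?_, ?_⟩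
      · intro c hc
        rw [List.mem_singleton] at hc
        subst hc
        exact ⟨fun q hq => hex q hq, hN, subset_rfl, le_rfl⟩
      · exact t_or_bot hext hmp (hext _ (ipc_iff_refl _))
  · -- Main part
    intro A hA hw
    cases hA with
    | bot =>
      exact ⟨[], ⟨by simp, hext _ (ipc_iff_refl _)⟩⟩
    | atom m =>
      refine ⟨[([m], [])], ⟨?_, ?_⟩⟩
      · intro c hc
        rw [List.mem_singleton] at hc
        subst hc
        refine ⟨by simp [Good], by simp, ?_, by simp [wsum, ww]⟩
        intro a ha
        rw [mem_atoms_form] at ha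
        simp at ha
        simp [Fm.atoms, ha]
      · exact t_or_bot hext hmp (hext _ (ipc_atom_comp m))
    | @and A1 A2 h1 h2 =>
      have hw1 : ww A1 < n := by have := ww_pos A2; simp [ww] at hw; omega
      have hw2 : ww A2 < n := by have := ww_pos A1; simp [ww] at hw; omega
      obtain ⟨L1, hO1⟩ := (IH (ww A1) hw1).2 A1 h1 le_rfl
      obtain ⟨L2, hO2⟩ := (IH (ww A2) hw2).2 A2 h2 le_rfl
      have hC : ∀ Γ Δ, (∀ p ∈ Δ, NNIL p.2) → wsum Δ + 2 ≤ ww A1 + ww A2 →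
          ConjP T Γ Δ := by
        intro Γ Δ hNN hle
        refine (IH (wsum Δ + 1) ?_).1 Γ Δ hNN le_rfl
        simp [ww] at hw; omega
      obtain ⟨L, hcond, heq⟩ := conjoin hext hmp hC hO1 hO2
      refine ⟨L, ⟨?_, heq⟩⟩
      intro c hc
      obtain ⟨hg, hn, ha, hwc⟩ := hcond c hc
      exact ⟨hg, hn, ha, by simp [ww]; omega⟩
    | @or A1 A2 h1 h2 =>
      have hw1 : ww A1 < n := by have := ww_pos A2; simp [ww] at hw; omega
      have hw2 : ww A2 < n := by have := ww_pos A1; simp [ww] at hw; omega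
      obtain ⟨L1, hc1, he1⟩ := (IH (ww A1) hw1).2 A1 h1 le_rfl
      obtain ⟨L2, hc2, he2⟩ := (IH (ww A2) hw2).2 A2 h2 le_rfl
      refine ⟨L1 ++ L2, ⟨?_, ?_⟩⟩
      · intro c hc
        rcases List.mem_append.1 hc with h | h
        · obtain ⟨hg, hn, ha, hwc⟩ := hc1 c h
          refine ⟨hg, hn, ha.trans ?_, by simp [ww]; omega⟩
          simp [Fm.atoms]
        · obtain ⟨hg, hn, ha, hwc⟩ := hc2 c h
          refine ⟨hg, hn, ha.trans ?_, by simp [ww]; omega⟩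
          simp [Fm.atoms]
      · rw [List.map_append]
        exact t_iff_trans hext hmp (t_congr_or hext hmp he1 he2)
          (hext _ (ipc_bigOr_append _ _))
    | @imp C B hNI hB =>
      cases hNI with
      | bot =>
        refine ⟨[([], [])], ⟨?_, ?_⟩⟩
        · intro c hc
          rw [List.mem_singleton] at hc
          subst hc
          refine ⟨by simp [Good], by simp, ?_, ?_⟩
          · intro a ha
            rw [mem_atoms_form] at ha
            simp at ha
          · have := ww_pos (Fm.bot.imp B)
            simp [wsum]; omega
        · exact t_or_bot hext hmp (hext _ (ipc_bot_imp B))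
      | atom q =>
        by_cases hTq : T (Fm.top.imp (.atom q))
        · have hq : T (Fm.atom q) := hmp _ _ hTq (hext _ ipc_top)
          have hwB : ww B < n := by
            have := kk_pos (Fm.atom q); have := ww_pos B; simp [ww, kk] at hw ⊢; omega
          obtain ⟨LB, hcB, heB⟩ := (IH (ww B) hwB).2 B hB le_rfl
          refine ⟨LB, ⟨?_, ?_⟩⟩
          · intro c hc
            obtain ⟨hg, hn, ha, hwc⟩ := hcB c hc
            refine ⟨hg, hn, ha.trans ?_, by simp [ww, kk]; omega⟩
            simp [Fm.atoms]
          · refine t_iff_trans hext hmp ?_ heB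
            exact hmp _ _ (hext _ (ipc_q_iff q B)) hq
        · refine ⟨[([], [(q, B)])], ⟨?_, ?_⟩⟩
          · intro c hc
            rw [List.mem_singleton] at hc
            subst hc
            refine ⟨?_, by simpa using hB, ?_, by simp [wsum, ww, kk]⟩
            · intro r hr
              rw [List.mem_singleton] at hr
              subst hr
              exact hTq
            · intro a ha
              rw [mem_atoms_form] at ha
              simp at ha
              simp [Fm.atoms]
              tauto
          · exact t_or_bot hext hmp (hext _ (ipc_imp_comp q B))
      | @and C1 C2 hC1 hC2 =>
        have hlt : ww (C1.imp (C2.imp B)) < ww ((C1.and C2).imp B) := by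
          have := kk_pos C1; have := kk_pos C2; have := ww_pos B
          simp [ww, kk]; nlinarith
        have hA' : NNIL (C1.imp (C2.imp B)) := .imp hC1 (.imp hC2 hB)
        obtain ⟨L, hc, he⟩ := (IH (ww (C1.imp (C2.imp B))) (by omega)).2 _ hA' le_rfl
        refine ⟨L, ⟨?_, ?_⟩⟩
        · intro c hcm
          obtain ⟨hg, hn, ha, hwc⟩ := hc c hcm
          refine ⟨hg, hn, ha.trans ?_, by omega⟩
          intro a ha2
          simp [Fm.atoms] at ha2 ⊢
          tauto
        · exact t_iff_trans hext hmp (hext _ (ipc_curry C1 C2 B)) he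
      | @or C1 C2 hC1 hC2 =>
        have hlt1 : ww (C1.imp B) < ww ((C1.or C2).imp B) := by
          have := kk_pos C2; have := ww_pos B; simp [ww, kk]; nlinarith
        have hlt2 : ww (C2.imp B) < ww ((C1.or C2).imp B) := by
          have := kk_pos C1; have := ww_pos B; simp [ww, kk]; nlinarith
        have hsum : ww (C1.imp B) + ww (C2.imp B) = ww ((C1.or C2).imp B) := by
          simp [ww, kk]; ring
        obtain ⟨L1, hO1⟩ := (IH (ww (C1.imp B)) (by omega)).2 _ (NNIL.imp hC1 hB) le_rfl
        obtain ⟨L2, hO2⟩ := (IH (ww (C2.imp B)) (by omega)).2 _ (NNIL.imp hC2 hB) le_rfl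
        have hC : ∀ Γ Δ, (∀ p ∈ Δ, NNIL p.2) →
            wsum Δ + 2 ≤ ww (C1.imp B) + ww (C2.imp B) → ConjP T Γ Δ := by
          intro Γ Δ hNN hle
          refine (IH (wsum Δ + 1) ?_).1 Γ Δ hNN le_rfl
          omega
        obtain ⟨L, hcond, heq⟩ := conjoin hext hmp hC hO1 hO2
        refine ⟨L, ⟨?_, ?_⟩⟩
        · intro c hc
          obtain ⟨hg, hn, ha, hwc⟩ := hcond c hc
          refine ⟨hg, hn, ha.trans ?_, by omega⟩
          intro a ha2
          simp [Fm.atoms] at ha2 ⊢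
          tauto
        · exact t_iff_trans hext hmp (hext _ (ipc_uncurry_or C1 C2 B)) heq

end Key

theorem stmt_15 (T : Fm → Prop) (hext : ∀ A, IPC A → T A)
    (hmp : ∀ A B, T (A.imp B) → T A → T B) (A : Fm) (hA : NNIL A) :
    ∃ l : List Fm, (∀ B ∈ l, IsComponentOver T B ∧ B.atoms ⊆ A.atoms) ∧
      T (A.iff (bigOrL l)) := by
  obtain ⟨L, hc, heq⟩ := (key hext hmp (ww A)).2 A hA le_rfl
  refine ⟨L.map form, ?_, heq⟩
  intro B hB
  rcases List.mem_map.1 hB with ⟨c, hcm, rfl⟩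
  obtain ⟨hg, hn, ha, -⟩ := hc c hcm
  exact ⟨⟨c.1, c.2, rfl, hg⟩, ha⟩
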